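/- For all integers μ, ℓ with 1 ≤ ℓ ≤ μ, Σ_{κ=0}^{ℓ−1} C(μ,κ) C(μ+1−κ, ℓ−κ) · B_κ/((μ+1−κ)(ℓ+1−κ)) = −C(μ,ℓ)·B_ℓ/(μ+1−ℓ). -/

import Mathlib

open Finset

lemma stmt9_aux (κ a b : ℕ) :
    (((κ+a+b).choose κ : ℕ) : ℚ) * (((a+b+1).choose a : ℕ) : ℚ) / (((a+b+1:ℕ):ℚ) * ((a+1:ℕ):ℚ))
    = (((κ+a+b+1).choose (κ+a+1) : ℕ) : ℚ) * (((κ+a+1).choose κ : ℕ) : ℚ) / (((κ+a+b+1:ℕ):ℚ) * ((b+1:ℕ):ℚ)) := by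
  rw [Nat.cast_choose ℚ (by omega : κ ≤ κ+a+b), Nat.cast_choose ℚ (by omega : a ≤ a+b+1),
    Nat.cast_choose ℚ (by omega : κ+a+1 ≤ κ+a+b+1), Nat.cast_choose ℚ (by omega : κ ≤ κ+a+1)]
  have e1 : κ+a+b-κ = a+b := by omega
  have e2 : a+b+1-a = b+1 := by omega
  have e3 : κ+a+b+1-(κ+a+1) = b := by omega
  have e4 : κ+a+1-κ = a+1 := by omega
  rw [e1, e2, e3, e4]
  rw [show a+b+1 = (a+b)+1 from rfl, show κ+a+b+1 = (κ+a+b)+1 from rfl,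
    Nat.factorial_succ (a+b), Nat.factorial_succ (κ+a+b), Nat.factorial_succ a,
    Nat.factorial_succ b, Nat.factorial_succ (κ+a)]
  have h1 := Nat.factorial_pos κ
  have h2 := Nat.factorial_pos a
  have h3 := Nat.factorial_pos b
  have h4 := Nat.factorial_pos (a+b)
  have h5 := Nat.factorial_pos (κ+a)
  have h6 := Nat.factorial_pos (κ+a+b)
  field_simp
  push_cast
  ring

/-- `Σ_{κ=0}^{ℓ−1} C(μ,κ) C(μ+1−κ,ℓ−κ)·B_κ/((μ+1−κ)(ℓ+1−κ)) = −C(μ,ℓ)·B_ℓ/(μ+1−ℓ)`. -/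
theorem stmt9 (μ ℓ : ℕ) (h1 : 1 ≤ ℓ) (h2 : ℓ ≤ μ) :
    ∑ κ ∈ Finset.range ℓ,
        (μ.choose κ : ℚ) * ((μ + 1 - κ).choose (ℓ - κ) : ℚ) * bernoulli κ /
          (((μ + 1 - κ : ℕ) : ℚ) * ((ℓ + 1 - κ : ℕ) : ℚ)) =
      -(μ.choose ℓ : ℚ) * bernoulli ℓ / ((μ + 1 - ℓ : ℕ) : ℚ) := by
  have key : ∑ κ ∈ Finset.range (ℓ+1),
      (μ.choose κ : ℚ) * ((μ + 1 - κ).choose (ℓ - κ) : ℚ) * bernoulli κ /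
        (((μ + 1 - κ : ℕ) : ℚ) * ((ℓ + 1 - κ : ℕ) : ℚ)) = 0 := by
    have hterm : ∀ κ ∈ Finset.range (ℓ+1),
        (μ.choose κ : ℚ) * ((μ + 1 - κ).choose (ℓ - κ) : ℚ) * bernoulli κ /
          (((μ + 1 - κ : ℕ) : ℚ) * ((ℓ + 1 - κ : ℕ) : ℚ)) =
        ((μ+1).choose (ℓ+1) : ℚ) / (((μ+1:ℕ):ℚ) * ((μ+1-ℓ:ℕ):ℚ)) *
          (((ℓ+1).choose κ : ℚ) * bernoulli κ) := by
      intro κ hκ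
      rw [Finset.mem_range] at hκ
      obtain ⟨a, rfl⟩ : ∃ a, ℓ = κ + a := ⟨ℓ - κ, by omega⟩
      obtain ⟨b, rfl⟩ : ∃ b, μ = κ + a + b := ⟨μ - (κ + a), by omega⟩
      have e1 : κ + a + b + 1 - κ = a + b + 1 := by omega
      have e2 : κ + a - κ = a := by omega
      have e3 : κ + a + 1 - κ = a + 1 := by omega
      have e4 : κ + a + b + 1 - (κ + a) = b + 1 := by omega
      rw [e1, e2, e3, e4]
      have := stmt9_aux κ a b
      have hrw : (((κ+a+b).choose κ : ℕ) : ℚ) * (((a+b+1).choose a : ℕ) : ℚ) * bernoulli κ / (((a+b+1:ℕ):ℚ) * ((a+1:ℕ):ℚ))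
          = (((κ+a+b).choose κ : ℕ) : ℚ) * (((a+b+1).choose a : ℕ) : ℚ) / (((a+b+1:ℕ):ℚ) * ((a+1:ℕ):ℚ)) * bernoulli κ := by
        ring
      rw [hrw, this]
      push_cast
      ring
    rw [Finset.sum_congr rfl hterm, ← Finset.mul_sum, sum_bernoulli]
    simp [Nat.succ_ne_zero, show ℓ + 1 ≠ 1 by omega]
    exact fun h => absurd h (by omega)
  rw [Finset.sum_range_succ] at key
  have e5 : ℓ + 1 - ℓ = 1 := by omega
  have e6 : ℓ - ℓ = 0 := by omega
  rw [e5, e6] at key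
  simp only [Nat.choose_zero_right, Nat.cast_one, mul_one] at key
  linear_combination key
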